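/- Let G be an FC group and D : G → U(n) a unitary representation. Then G'/(ker D ∩ G') is finite, where G' is the commutator subgroup of G. -/

import Mathlib

open scoped commutatorElement

private lemma aux_comm_central {K : Type*} [Group K] (g h z : K)
    (hz : z ∈ Subgroup.center K) : ⁅g * z, h⁆ = ⁅g, h⁆ := by
  have hzc : ∀ a : K, a * z = z * a := Subgroup.mem_center_iff.mp hz
  simp only [commutatorElement_def, mul_inv_rev, mul_assoc]
  rw [← mul_assoc z h, ← hzc h]
  simp only [mul_assoc, mul_inv_cancel_left]

private lemma aux_comm_central' {K : Type*} [Group K] (g h z : K)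
    (hz : z ∈ Subgroup.center K) : ⁅g, h * z⁆ = ⁅g, h⁆ := by
  rw [← commutatorElement_inv, aux_comm_central h g z hz, commutatorElement_inv]

private lemma aux_centralizer_finiteIndex {K : Type*} [Group K]
    (hFC : ∀ x : K, (Set.range fun h : K => h * x * h⁻¹).Finite) (g : K) :
    (Subgroup.centralizer {g}).FiniteIndex := by
  have horb : (MulAction.orbit (ConjAct K) g).Finite := by
    refine (hFC g).subset ?_
    rintro x ⟨h, rfl⟩
    exact ⟨ConjAct.ofConjAct h, (ConjAct.smul_def h g).symm⟩
  have hfin : Finite (ConjAct K ⧸ MulAction.stabilizer (ConjAct K) g) := by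
    haveI : Finite (MulAction.orbit (ConjAct K) g) := horb
    exact Finite.of_equiv _ (MulAction.orbitEquivQuotientStabilizer (ConjAct K) g)
  haveI := Subgroup.finiteIndex_of_finite_quotient
    (H := MulAction.stabilizer (ConjAct K) g)
  rw [Subgroup.centralizer_eq_comap_stabilizer]
  constructor
  have hidx := Subgroup.index_comap_of_surjective (H := MulAction.stabilizer (ConjAct K) g)
    (f := (ConjAct.toConjAct : K ≃* ConjAct K).toMonoidHom) ConjAct.toConjAct.surjective
  intro h0
  exact Subgroup.FiniteIndex.index_ne_zero (H := MulAction.stabilizer (ConjAct K) g)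
    (hidx.symm.trans h0)

private lemma aux_center_finiteIndex {K : Type*} [Group K] {n : ℕ}
    (hFC : ∀ x : K, (Set.range fun h : K => h * x * h⁻¹).Finite)
    (φ : K →* Matrix.unitaryGroup (Fin n) ℂ) (hφ : Function.Injective φ) :
    (Subgroup.center K).FiniteIndex := by
  classical
  set ψ : K → Matrix (Fin n) (Fin n) ℂ := fun k => (φ k : Matrix (Fin n) (Fin n) ℂ) with hψdef
  have hψinj : Function.Injective ψ := fun a b h => hφ (Subtype.ext h)
  have hψmul : ∀ a b : K, ψ (a * b) = ψ a * ψ b := by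
    intro a b; simp [hψdef]
  obtain ⟨b, hb_sub, hb_span, hb_li⟩ := exists_linearIndependent ℂ (Set.range ψ)
  have hbfin : b.Finite := hb_li.setFinite
  set T : Set K := ψ ⁻¹' b with hTdef
  have hT : T.Finite := hbfin.preimage hψinj.injOn
  haveI : Finite T := hT
  have hC : (⨅ k : T, Subgroup.centralizer {(k : K)}).FiniteIndex :=
    Subgroup.finiteIndex_iInf fun k => aux_centralizer_finiteIndex hFC (k : K)
  refine Subgroup.finiteIndex_of_le (H := ⨅ k : T, Subgroup.centralizer {(k : K)}) ?_
  intro x hx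
  rw [Subgroup.mem_center_iff]
  intro y
  have hcomm : ∀ m ∈ Submodule.span ℂ (Set.range ψ), ψ x * m = m * ψ x := by
    rw [← hb_span]
    intro m hm
    induction hm using Submodule.span_induction with
    | mem m hm =>
      obtain ⟨k, rfl⟩ := hb_sub hm
      have hk : k ∈ T := hm
      have hxc : x ∈ Subgroup.centralizer {(k : K)} :=
        (Subgroup.mem_iInf.mp hx) ⟨k, hk⟩
      have hxk : k * x = x * k :=
        Subgroup.mem_centralizer_iff.mp hxc k rfl
      have := congrArg ψ hxk
      rw [hψmul, hψmul] at this
      exact this.symm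
    | zero => simp
    | add u v _ _ hu hv => rw [mul_add, add_mul, hu, hv]
    | smul c u _ hu => rw [Algebra.mul_smul_comm, Algebra.smul_mul_assoc, hu]
  have hxy : ψ x * ψ y = ψ y * ψ x :=
    hcomm (ψ y) (Submodule.subset_span (Set.mem_range_self y))
  apply hψinj
  rw [hψmul, hψmul, hxy]

private lemma aux_finite_commutatorSet {K : Type*} [Group K]
    (h : (Subgroup.center K).FiniteIndex) : Finite (commutatorSet K) := by
  haveI := h
  haveI : Finite (K ⧸ Subgroup.center K) := Subgroup.finite_quotient_of_finiteIndex
  have hsub : commutatorSet K ⊆ Set.range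
      (fun p : (K ⧸ Subgroup.center K) × (K ⧸ Subgroup.center K) =>
        ⁅p.1.out, p.2.out⁆) := by
    rintro x ⟨g, h, rfl⟩
    refine ⟨(QuotientGroup.mk g, QuotientGroup.mk h), ?_⟩
    obtain ⟨z1, hz1⟩ := QuotientGroup.mk_out_eq_mul (Subgroup.center K) g
    obtain ⟨z2, hz2⟩ := QuotientGroup.mk_out_eq_mul (Subgroup.center K) h
    simp only [hz1, hz2]
    rw [aux_comm_central _ _ _ z1.2, aux_comm_central' _ _ _ z2.2]
  have : (commutatorSet K).Finite := (Set.finite_range _).subset hsub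
  exact this

set_option maxHeartbeats 1000000 in
theorem stmt_6 {G : Type*} [Group G] (n : ℕ)
    (hFC : ∀ x : G, (Set.range fun h : G => h * x * h⁻¹).Finite)
    (D : G →* Matrix.unitaryGroup (Fin n) ℂ)
    [((D.ker ⊓ commutator G).subgroupOf (commutator G)).Normal] :
    Finite (↥(commutator G) ⧸ ((D.ker ⊓ commutator G).subgroupOf (commutator G))) := by
  classical
  -- the group K = image of D
  set H : Subgroup (Matrix.unitaryGroup (Fin n) ℂ) := D.range with hHdef
  -- FC property for ↥H
  have hFCH : ∀ x : ↥H, (Set.range fun h : ↥H => h * x * h⁻¹).Finite := by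
    intro x
    obtain ⟨g, hg⟩ := x.2
    have himg : (Subtype.val '' Set.range fun h : ↥H => h * x * h⁻¹) ⊆
        (fun y : G => D y) '' (Set.range fun h : G => h * g * h⁻¹) := by
      rintro _ ⟨_, ⟨h, rfl⟩, rfl⟩
      obtain ⟨y, hy⟩ := h.2
      refine ⟨y * g * y⁻¹, ⟨y, rfl⟩, ?_⟩
      push_cast
      rw [map_mul, map_mul, map_inv, hy, hg]
    have : (Subtype.val '' Set.range fun h : ↥H => h * x * h⁻¹).Finite :=
      Set.Finite.subset (((hFC g).image _)) himg
    exact Set.Finite.of_finite_image this Subtype.val_injective.injOn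
  -- center of ↥H has finite index, so commutator of ↥H is finite
  have hcen : (Subgroup.center ↥H).FiniteIndex :=
    aux_center_finiteIndex hFCH H.subtype Subtype.val_injective
  haveI : Finite (commutatorSet ↥H) := aux_finite_commutatorSet hcen
  haveI hfinH : Finite (commutator ↥H) := inferInstance
  -- transfer finiteness to ⁅H, H⁆
  have hmap : Subgroup.map H.subtype (commutator ↥H) = ⁅H, H⁆ := by
    rw [commutator_def, Subgroup.map_commutator, ← MonoidHom.range_eq_map,
      Subgroup.range_subtype]
  have hHH : Finite ↥(⁅H, H⁆ : Subgroup ↥(Matrix.unitaryGroup (Fin n) ℂ)) := by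
    rw [← hmap]
    have : ((commutator ↥H : Subgroup ↥H) : Set ↥H).Finite := Set.toFinite _
    exact (this.image H.subtype).to_subtype
  -- the map from commutator G
  set f : ↥(commutator G) →* Matrix.unitaryGroup (Fin n) ℂ :=
    D.comp (commutator G).subtype with hfdef
  have hker : f.ker = (D.ker ⊓ commutator G).subgroupOf (commutator G) := by
    ext x
    simp [hfdef, MonoidHom.mem_ker, Subgroup.mem_subgroupOf, x.2]
  have hrange : f.range = ⁅H, H⁆ := by
    rw [hfdef, MonoidHom.range_comp, Subgroup.range_subtype, hHdef,
      commutator_def, Subgroup.map_commutator, ← MonoidHom.range_eq_map]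
  have e : ↥(commutator G) ⧸ f.ker ≃* f.range := QuotientGroup.quotientKerEquivRange f
  rw [← hker]
  have : Finite f.range := by rw [hrange]; exact hHH
  exact Finite.of_equiv _ e.symm.toEquiv
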